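/- Let F be continuous and strictly increasing on [0,K] with F(0)=0, F(K)=1, and continuous derivative f > 0 on (0,K). Let N ≥ 1 be an integer and c > 0. Define the planner's objective 𝒲(b) = K − ∫_b^K ((F(x) − F(b))/(1 − F(b)))^N dx − N·c/(1 − F(b)) for b ∈ (0,K). Then 𝒲 is differentiable on (0,K) with 𝒲′(b) = (N·f(b)/(1 − F(b))²) · ( ∫_b^K ((F(x) − F(b))/(1 − F(b)))^(N−1) · (1 − F(x)) dx − c ). In particular, b is a critical point of 𝒲 if and only if ∫_b^K ((F(x) − F(b))/(1 − F(b)))^(N−1)·(1 − F(x)) dx = c (the planner's first-order condition). -/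

import Mathlib

open intervalIntegral Finset

private lemma aux_choose (M m : ℕ) (hm : m < M) :
    (M - m) * M.choose m = M * (M - 1).choose m := by
  have h2 := Nat.add_one_mul_choose_eq (M - 1) m
  have e : M - 1 + 1 = M := by omega
  rw [e] at h2
  rw [h2, Nat.choose_succ_right_eq]
  ring

private lemma ftc_pow {K : ℝ} {F f : ℝ → ℝ}
    (hFcont : ContinuousOn F (Set.Icc 0 K))
    (hderiv : ∀ x ∈ Set.Ioo 0 K, HasDerivAt F (f x) x)
    {b : ℝ} (hb : b ∈ Set.Ioo 0 K) (k : ℕ) :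
    HasDerivAt (fun a => ∫ x in a..K, F x ^ k) (-(F b ^ k)) b := by
  have hsub : Set.uIcc b K ⊆ Set.Icc 0 K := by
    rw [Set.uIcc_of_le hb.2.le]
    exact Set.Icc_subset_Icc hb.1.le le_rfl
  have hint : IntervalIntegrable (fun x => F x ^ k) MeasureTheory.volume b K :=
    ((hFcont.pow k).mono hsub).intervalIntegrable
  have hco : ContinuousOn (fun x => F x ^ k) (Set.Ioo 0 K) := fun x hx =>
    ((hderiv x hx).continuousAt.pow k).continuousWithinAt
  exact intervalIntegral.integral_hasDerivAt_left hint
    (hco.stronglyMeasurableAtFilter isOpen_Ioo b hb)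
    ((hderiv b hb).continuousAt.pow k)

private lemma binom_int {K : ℝ} {F : ℝ → ℝ}
    (hFcont : ContinuousOn F (Set.Icc 0 K))
    {a : ℝ} (ha : a ∈ Set.Icc 0 K) (M : ℕ) :
    (∫ x in a..K, (F x - F a) ^ M)
      = ∑ m ∈ range (M + 1),
          (M.choose m : ℝ) * ((-F a) ^ (M - m) * ∫ x in a..K, F x ^ m) := by
  have hsub : Set.uIcc a K ⊆ Set.Icc 0 K := by
    rw [Set.uIcc_of_le ha.2]
    exact Set.Icc_subset_Icc ha.1 le_rfl
  have hpt : ∀ x : ℝ, (F x - F a) ^ M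
      = ∑ m ∈ range (M + 1), (M.choose m : ℝ) * ((-F a) ^ (M - m) * F x ^ m) := by
    intro x
    rw [sub_eq_add_neg, add_pow]
    exact Finset.sum_congr rfl fun m _ => by ring
  simp only [hpt]
  rw [intervalIntegral.integral_finset_sum]
  · exact Finset.sum_congr rfl fun m _ => by
      rw [intervalIntegral.integral_const_mul, intervalIntegral.integral_const_mul]
  · intro m _
    exact (continuousOn_const.mul
      (continuousOn_const.mul ((hFcont.mono hsub).pow m))).intervalIntegrable

private lemma phi_deriv {K : ℝ} {F f : ℝ → ℝ}
    (hFcont : ContinuousOn F (Set.Icc 0 K))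
    (hderiv : ∀ x ∈ Set.Ioo 0 K, HasDerivAt F (f x) x)
    {b : ℝ} (hb : b ∈ Set.Ioo 0 K) (n : ℕ) :
    HasDerivAt (fun a => ∫ x in a..K, (F x - F a) ^ (n + 1))
      (-((n + 1 : ℕ) : ℝ) * f b * ∫ x in b..K, (F x - F b) ^ n) b := by
  set M := n + 1 with hM
  set A : ℕ → ℝ := fun m => ∫ x in b..K, F x ^ m with hA
  have hsum : HasDerivAt
      (fun a => ∑ m ∈ range (M + 1),
        (M.choose m : ℝ) * ((-F a) ^ (M - m) * ∫ x in a..K, F x ^ m))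
      (∑ m ∈ range (M + 1), (M.choose m : ℝ) *
        ((((M - m : ℕ) : ℝ) * (-F b) ^ (M - m - 1) * -f b) * A m
          + (-F b) ^ (M - m) * -(F b ^ m))) b := by
    apply HasDerivAt.fun_sum
    intro m _
    exact ((((hderiv b hb).neg).pow (M - m)).mul
      (ftc_pow hFcont hderiv hb m)).const_mul _
  have hEq : (fun a => ∫ x in a..K, (F x - F a) ^ M) =ᶠ[nhds b]
      (fun a => ∑ m ∈ range (M + 1),
        (M.choose m : ℝ) * ((-F a) ^ (M - m) * ∫ x in a..K, F x ^ m)) := by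
    filter_upwards [isOpen_Ioo.mem_nhds hb] with a ha
    exact binom_int hFcont (Set.mem_Icc_of_Ioo ha) M
  have hΦ := hsum.congr_of_eventuallyEq hEq
  convert hΦ using 1
  case e'_4 => rfl
  case e'_5 => rfl
  -- value equality
  have hΨ := binom_int hFcont (Set.mem_Icc_of_Ioo hb) n
  rw [hΨ]
  simp only [mul_add, Finset.sum_add_distrib]
  have h0 : ∑ m ∈ range (M + 1),
      (M.choose m : ℝ) * ((-F b) ^ (M - m) * -(F b ^ m)) = 0 := by
    have h := add_pow (F b) (-F b) M
    rw [add_neg_cancel, zero_pow (by omega : M ≠ 0)] at h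
    have hterm : ∀ m : ℕ, (M.choose m : ℝ) * ((-F b) ^ (M - m) * -(F b ^ m))
        = -(F b ^ m * (-F b) ^ (M - m) * (M.choose m : ℝ)) := fun m => by ring
    simp only [hterm]
    rw [Finset.sum_neg_distrib, ← h, neg_zero]
  have h1 : ∑ m ∈ range (M + 1), (M.choose m : ℝ) *
        ((((M - m : ℕ) : ℝ) * (-F b) ^ (M - m - 1) * -f b) * A m)
      = -((M : ℕ) : ℝ) * f b *
        ∑ m ∈ range (n + 1), (n.choose m : ℝ) * ((-F b) ^ (n - m) * A m) := by
    rw [Finset.sum_range_succ]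
    have hlast : (M.choose M : ℝ)
        * (((M - M : ℕ) : ℝ) * (-F b) ^ (M - M - 1) * -f b * A M) = 0 := by simp
    rw [hlast, add_zero, Finset.mul_sum]
    apply Finset.sum_congr rfl
    intro m hm
    have hmlt : m < M := Finset.mem_range.mp hm
    have e1 : M - m - 1 = n - m := by omega
    have e2 : ((M - m : ℕ) : ℝ) * (M.choose m : ℝ)
        = ((M : ℕ) : ℝ) * ((M - 1).choose m : ℝ) := by
      exact_mod_cast congrArg (Nat.cast (R := ℝ)) (aux_choose M m hmlt)
    have e3 : M - 1 = n := by omega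
    rw [e3] at e2
    rw [e1]
    linear_combination (-((-F b) ^ (n - m) * f b * A m)) * e2
  rw [h1, h0, add_zero]

/-- The planner's objective
`𝒲(b) = K − ∫_b^K ((F x − F b)/(1 − F b))^N dx − N·c/(1 − F b)` is
differentiable on `(0,K)` with
`𝒲′(b) = (N·f(b)/(1−F(b))²)·(∫_b^K ((F x − F b)/(1 − F b))^(N−1)·(1 − F x) dx − c)`;
in particular `b` is a critical point iff the planner's first-order condition
holds. -/
theorem stmt_15
    (K : ℝ) (hK : 0 < K)
    (F f : ℝ → ℝ)
    (hFcont : ContinuousOn F (Set.Icc 0 K))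
    (hFmono : StrictMonoOn F (Set.Icc 0 K))
    (hF0 : F 0 = 0) (hFK : F K = 1)
    (hderiv : ∀ x ∈ Set.Ioo 0 K, HasDerivAt F (f x) x)
    (hfpos : ∀ x ∈ Set.Ioo 0 K, 0 < f x)
    (hfcont : ContinuousOn f (Set.Ioo 0 K))
    (N : ℕ) (hN : 1 ≤ N)
    (c : ℝ) (hc : 0 < c)
    (Wfn : ℝ → ℝ)
    (hW : ∀ b ∈ Set.Ioo (0:ℝ) K,
      Wfn b = K - (∫ x in b..K, ((F x - F b) / (1 - F b)) ^ N)
                - (N : ℝ) * c / (1 - F b)) :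
    ∀ b ∈ Set.Ioo (0:ℝ) K,
      HasDerivAt Wfn
        (((N : ℝ) * f b / (1 - F b) ^ 2)
          * ((∫ x in b..K, ((F x - F b) / (1 - F b)) ^ (N - 1) * (1 - F x)) - c))
        b ∧
      (deriv Wfn b = 0 ↔
        (∫ x in b..K, ((F x - F b) / (1 - F b)) ^ (N - 1) * (1 - F x)) = c) := by
  obtain ⟨n, rfl⟩ : ∃ n, N = n + 1 := ⟨N - 1, by omega⟩
  intro b hb
  have hbI : b ∈ Set.Icc 0 K := Set.mem_Icc_of_Ioo hb
  have hsub : Set.uIcc b K ⊆ Set.Icc 0 K := by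
    rw [Set.uIcc_of_le hb.2.le]
    exact Set.Icc_subset_Icc hb.1.le le_rfl
  have hu1 : F b < 1 := by
    have := hFmono hbI (Set.mem_Icc.mpr ⟨hK.le, le_rfl⟩) hb.2
    rwa [hFK] at this
  have hDpos : (0:ℝ) < 1 - F b := by linarith
  have hD : (1:ℝ) - F b ≠ 0 := ne_of_gt hDpos
  have hvpos : 0 < f b := hfpos b hb
  -- rewrite the objective
  have hdivpow : ∀ a : ℝ, (∫ x in a..K, ((F x - F a) / (1 - F a)) ^ (n + 1))
      = (∫ x in a..K, (F x - F a) ^ (n + 1)) / (1 - F a) ^ (n + 1) := by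
    intro a
    simp only [div_pow]
    exact intervalIntegral.integral_div _ _
  have hWeq : Wfn =ᶠ[nhds b]
      (fun a => K - (∫ x in a..K, (F x - F a) ^ (n + 1)) / (1 - F a) ^ (n + 1)
        - ((n + 1 : ℕ) : ℝ) * c / (1 - F a)) := by
    filter_upwards [isOpen_Ioo.mem_nhds hb] with a ha
    rw [hW a ha, hdivpow a]
  -- derivatives of pieces
  have hΦ := phi_deriv hFcont hderiv hb n
  have hP : HasDerivAt (fun a => (1 - F a) ^ (n + 1))
      (((n + 1 : ℕ) : ℝ) * (1 - F b) ^ (n + 1 - 1) * -f b) b :=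
    ((hderiv b hb).const_sub 1).pow (n + 1)
  have hPne : (1 - F b) ^ (n + 1) ≠ 0 := pow_ne_zero _ hD
  have hdiv := hΦ.div hP hPne
  have hc2 : HasDerivAt (fun a => ((n + 1 : ℕ) : ℝ) * c / (1 - F a))
      ((0 * (1 - F b) - ((n + 1 : ℕ) : ℝ) * c * -f b) / (1 - F b) ^ 2) b :=
    (hasDerivAt_const b (((n + 1 : ℕ) : ℝ) * c)).div ((hderiv b hb).const_sub 1) hD
  have hW2 := ((hasDerivAt_const b K).sub hdiv).sub hc2
  have hWd := hW2.congr_of_eventuallyEq hWeq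
  -- identify the target integral
  set Ψ : ℝ := ∫ x in b..K, (F x - F b) ^ n with hΨdef
  set Φb : ℝ := ∫ x in b..K, (F x - F b) ^ (n + 1) with hΦdef
  have hi1 : IntervalIntegrable (fun x => (1 - F b) * (F x - F b) ^ n)
      MeasureTheory.volume b K :=
    (continuousOn_const.mul
      (((hFcont.mono hsub).sub continuousOn_const).pow n)).intervalIntegrable
  have hi2 : IntervalIntegrable (fun x => (F x - F b) ^ (n + 1))
      MeasureTheory.volume b K :=
    (((hFcont.mono hsub).sub continuousOn_const).pow (n + 1)).intervalIntegrable
  have hT : (∫ x in b..K, ((F x - F b) / (1 - F b)) ^ (n + 1 - 1) * (1 - F x))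
      = ((1 - F b) * Ψ - Φb) / (1 - F b) ^ n := by
    have hpt : ∀ x : ℝ, ((F x - F b) / (1 - F b)) ^ (n + 1 - 1) * (1 - F x)
        = ((1 - F b) * (F x - F b) ^ n - (F x - F b) ^ (n + 1)) / (1 - F b) ^ n := by
      intro x
      simp only [Nat.add_sub_cancel]
      rw [div_pow, div_mul_eq_mul_div]
      congr 1
      ring
    simp only [hpt]
    rw [intervalIntegral.integral_div, intervalIntegral.integral_sub hi1 hi2,
      intervalIntegral.integral_const_mul]
  have hmain : HasDerivAt Wfn
      ((((n + 1 : ℕ) : ℝ) * f b / (1 - F b) ^ 2)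
        * ((∫ x in b..K, ((F x - F b) / (1 - F b)) ^ (n + 1 - 1) * (1 - F x)) - c)) b := by
    convert hWd using 1
    case e'_4 => rfl
    case e'_5 => rfl
    rw [hT]
    simp only [Nat.add_sub_cancel]
    field_simp
    ring
  refine ⟨hmain, ?_⟩
  rw [hmain.deriv]
  have hcoeff : (((n + 1 : ℕ) : ℝ) * f b / (1 - F b) ^ 2) ≠ 0 := by
    apply ne_of_gt
    apply div_pos (mul_pos (by positivity) hvpos) (by positivity)
  constructor
  · intro h
    rcases mul_eq_zero.mp h with h | h
    · exact absurd h hcoeff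
    · linarith [sub_eq_zero.mp h]
  · intro h
    rw [h, sub_self, mul_zero]
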